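/- Let ν > 1, τ > 0, and 0 < S₁ < S. Let Ω ∈ ℝ^{3×3} be skew-symmetric. Then there is a constant C(S₁, S, ν, τ) > 0 such that for all y ∈ ℝ³ with |y| ≥ S and all z ∈ ℝ³ with |z| ≤ S₁: ∫₀^∞ (|y − τ t e₁ − e^{−tΩ} z|² + t)^{−ν} dt ≤ C(S₁, S, ν, τ) · (|y| · s_τ(y))^{−ν + 1/2}. -/

import Mathlib

set_option maxHeartbeats 1000000

open NormedSpace MeasureTheory Matrix

noncomputable def sTau (τ : ℝ) (x : EuclideanSpace ℝ (Fin 3)) : ℝ := 1 + τ * (‖x‖ - x 0)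

noncomputable def toE3 (v : Fin 3 → ℝ) : EuclideanSpace ℝ (Fin 3) :=
  (EuclideanSpace.equiv (Fin 3) ℝ).symm v

-- Case (i): small time  τ*t ≤ (S-S₁)/2
lemma aux_case1 (S₁ S τ t r y1 g A p m : ℝ) (hS₁ : 0 < S₁) (hS : S₁ < S) (hr : S ≤ r)
    (hy1 : y1^2 ≤ r^2) (hτt : 0 ≤ τ*t) (hcase : τ*t ≤ (S-S₁)/2) (hgr : r - τ*t ≤ g)
    (hA2 : S₁ ≤ g → (g-S₁)^2 ≤ A) (hp0 : 0 ≤ p) (hpr : p ≤ r) (hm2r : m^2 ≤ r^2)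
    (ht : 0 ≤ t) (hA : 0 ≤ A) :
    (S-S₁)^2/(4*(17/4*S^2+S+1)) * ((y1-τ*t)^2 + (1 + (r^2-y1^2) + p + m^2)) ≤ A + t := by
  have hS0 : 0 < S := lt_trans hS₁ hS
  have hK₂ : (0:ℝ) < 17/4*S^2+S+1 := by positivity
  have hr0 : 0 < r := lt_of_lt_of_le hS0 hr
  have hy1r : y1 ≤ r := by nlinarith [sq_nonneg (y1 - r)]
  have hy1r' : -r ≤ y1 := by nlinarith [sq_nonneg (y1 + r)]
  have hgS₁ : S₁ ≤ g := by linarith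
  have hA3 : (g - S₁)^2 ≤ A := hA2 hgS₁
  have hgδr : (S-S₁)*r ≤ 2*S*(g - S₁) := by
    have h1 : 2*S*(r - τ*t) ≤ 2*S*g := by
      apply mul_le_mul_of_nonneg_left hgr; positivity
    have h2 : 2*S*(τ*t) ≤ 2*S*((S-S₁)/2) := by
      apply mul_le_mul_of_nonneg_left hcase (by positivity : (0:ℝ) ≤ 2*S)
    have h3 : S*(S+S₁) ≤ r*(S+S₁) := by
      apply mul_le_mul_of_nonneg_right hr; linarith
    nlinarith [h1, h2, h3]
  have hA4 : (S-S₁)^2*r^2 ≤ 4*S^2*A := by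
    have h1 : ((S-S₁)*r)*((S-S₁)*r) ≤ (2*S*(g-S₁))*(2*S*(g-S₁)) :=
      mul_self_le_mul_self (mul_nonneg (by linarith) hr0.le) hgδr
    have h2 : (4*S^2)*((g-S₁)^2) ≤ (4*S^2)*A :=
      mul_le_mul_of_nonneg_left hA3 (by positivity)
    nlinarith [h1, h2]
  have hu2 : (y1 - τ*t)^2 ≤ (3/2*r)^2 := by
    apply sq_le_sq'
    · have : τ*t ≤ r/2 := by linarith
      linarith
    · linarith
  have hXS : S^2*((y1-τ*t)^2 + (1 + (r^2-y1^2) + p + m^2)) ≤ (17/4*S^2+S+1)*r^2 := by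
    have hpS : S^2*p ≤ S*r^2 := by
      have h1 : S^2*p ≤ S^2*r := mul_le_mul_of_nonneg_left hpr (by positivity)
      have h2 : S^2*r ≤ S*r^2 := by nlinarith [mul_le_mul_of_nonneg_right hr (mul_pos hS0 hr0).le]
      linarith
    have hS2r2 : S^2 ≤ r^2 := by nlinarith
    nlinarith [mul_le_mul_of_nonneg_left hu2 (sq_nonneg S),
      mul_le_mul_of_nonneg_left hm2r (sq_nonneg S), mul_le_mul_of_nonneg_left hy1 (sq_nonneg S),
      sq_nonneg (y1*S), sq_nonneg S, sq_nonneg r]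
  have hmain : (S-S₁)^2*((y1-τ*t)^2 + (1 + (r^2-y1^2) + p + m^2))
      ≤ 4*(17/4*S^2+S+1)*A := by
    have step3 : S^2*((S-S₁)^2*((y1-τ*t)^2 + (1 + (r^2-y1^2) + p + m^2)))
        ≤ S^2*(4*(17/4*S^2+S+1)*A) := by
      calc S^2*((S-S₁)^2*((y1-τ*t)^2 + (1 + (r^2-y1^2) + p + m^2)))
          = (S-S₁)^2*(S^2*((y1-τ*t)^2 + (1 + (r^2-y1^2) + p + m^2))) := by ring
        _ ≤ (S-S₁)^2*((17/4*S^2+S+1)*r^2) := mul_le_mul_of_nonneg_left hXS (by positivity)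
        _ = (17/4*S^2+S+1)*((S-S₁)^2*r^2) := by ring
        _ ≤ (17/4*S^2+S+1)*(4*S^2*A) := mul_le_mul_of_nonneg_left hA4 hK₂.le
        _ = S^2*(4*(17/4*S^2+S+1)*A) := by ring
    exact le_of_mul_le_mul_left step3 (by positivity)
  calc (S-S₁)^2/(4*(17/4*S^2+S+1)) * ((y1-τ*t)^2 + (1 + (r^2-y1^2) + p + m^2))
      = (S-S₁)^2*((y1-τ*t)^2 + (1 + (r^2-y1^2) + p + m^2))/(4*(17/4*S^2+S+1)) := by ring
    _ ≤ (4*(17/4*S^2+S+1)*A)/(4*(17/4*S^2+S+1)) := by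
        apply div_le_div_of_nonneg_right hmain (by positivity) |>.trans_eq rfl
    _ = A := by field_simp
    _ ≤ A + t := by linarith

-- Case (ii): large time, outside wake:  (S-S₁)/2 < τ*t, 4*S₁ ≤ g
lemma aux_case2 (S₁ S τ t u ρ2 g A p m : ℝ) (hS₁ : 0 < S₁) (hS : S₁ < S) (hτ : 0 < τ)
    (ht : 0 < t) (hcase : (S-S₁)/2 < τ*t) (hcase2 : 4*S₁ ≤ g)
    (hg2 : g^2 = u^2 + ρ2) (hρ2 : 0 ≤ ρ2) (hA2 : S₁ ≤ g → (g-S₁)^2 ≤ A)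
    (hpu : p ≤ (1 + u^2)/2 + τ*t) (hm2u : m^2 ≤ u^2) :
    min (1/5) (min (1/(2*τ)) ((S-S₁)/(6*τ))) * (u^2 + (1 + ρ2 + p + m^2)) ≤ A + t := by
  set c₂ := min (1/5) (min (1/(2*τ)) ((S-S₁)/(6*τ))) with hc₂def
  have hδ : 0 < S - S₁ := by linarith
  have hc₂0 : 0 < c₂ := lt_min (by norm_num) (lt_min (by positivity) (by positivity))
  have h2a : c₂ ≤ 1/5 := min_le_left _ _
  have h2b : c₂ ≤ 1/(2*τ) := le_trans (min_le_right _ _) (min_le_left _ _)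
  have h2c : c₂ ≤ (S-S₁)/(6*τ) := le_trans (min_le_right _ _) (min_le_right _ _)
  clear_value c₂
  clear hc₂def
  have hA3 : (g - S₁)^2 ≤ A := hA2 (by linarith)
  have hA5 : 9/16*(u^2 + ρ2) ≤ A := by nlinarith [hA3, hg2, hcase2, hS₁]
  have hb' : c₂ * (2*τ) ≤ 1 := by
    rw [← le_div_iff₀ (by positivity : (0:ℝ) < 2*τ)]; exact h2b
  have hc' : c₂ * (6*τ) ≤ S-S₁ := by
    rw [← le_div_iff₀ (by positivity : (0:ℝ) < 6*τ)]; exact h2c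
  have hδt : S-S₁ < 2*(τ*t) := by
    rw [div_lt_iff₀ (by norm_num : (0:ℝ) < 2)] at hcase; linarith
  have h3c : 3*c₂ ≤ t := by
    have h1 : c₂ * (6*τ) ≤ 2*(τ*t) := by linarith
    have h2 : (3*c₂)*(2*τ) ≤ t*(2*τ) := by nlinarith [h1]
    exact le_of_mul_le_mul_right h2 (by positivity)
  have hcτt : c₂ * (τ*t) ≤ t/2 := by
    have h1 : (c₂*(τ*t))*2 ≤ t*1 := by nlinarith [mul_le_mul_of_nonneg_right hb' ht.le]
    linarith
  have hXb : u^2 + (1 + ρ2 + p + m^2) ≤ 5/2*u^2 + ρ2 + 3/2 + τ*t := by linarith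
  have hcu : c₂*u^2 ≤ 1/5*u^2 := mul_le_mul_of_nonneg_right h2a (sq_nonneg u)
  have hcρ : c₂*ρ2 ≤ 1/5*ρ2 := mul_le_mul_of_nonneg_right h2a hρ2
  calc c₂ * (u^2 + (1 + ρ2 + p + m^2)) ≤ c₂ * (5/2*u^2 + ρ2 + 3/2 + τ*t) :=
        mul_le_mul_of_nonneg_left hXb hc₂0.le
    _ = 5/2*(c₂*u^2) + c₂*ρ2 + 3/2*c₂ + c₂*(τ*t) := by ring
    _ ≤ 5/2*(1/5*u^2) + 1/5*ρ2 + t/2 + t/2 := by linarith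
    _ ≤ 9/16*(u^2+ρ2) + t := by linarith [sq_nonneg u]
    _ ≤ A + t := by linarith

-- Case (iii): large time, in wake: (S-S₁)/2 < τ*t, g < 4*S₁
lemma aux_case3 (S₁ S τ t u ρ2 g A p m : ℝ) (hS₁ : 0 < S₁) (hS : S₁ < S) (hτ : 0 < τ)
    (ht : 0 < t) (hcase : (S-S₁)/2 < τ*t) (hcase2 : g < 4*S₁) (hg : 0 ≤ g)
    (hg2 : g^2 = u^2 + ρ2) (hρ2 : 0 ≤ ρ2) (hA : 0 ≤ A)
    (hpu : p ≤ (1 + u^2)/2 + τ*t) (hm2u : m^2 ≤ u^2) :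
    min (1/(2*τ)) ((S-S₁)/(4*τ*(56*S₁^2+3/2))) * (u^2 + (1 + ρ2 + p + m^2)) ≤ A + t := by
  set B : ℝ := 56*S₁^2+3/2 with hBdef
  have hB : 0 < B := by rw [hBdef]; positivity
  set c₃ := min (1/(2*τ)) ((S-S₁)/(4*τ*B)) with hc₃def
  have hδ : 0 < S - S₁ := by linarith
  have hc₃0 : 0 < c₃ := lt_min (by positivity) (by positivity)
  have h3a : c₃ ≤ 1/(2*τ) := min_le_left _ _
  have h3b : c₃ ≤ (S-S₁)/(4*τ*B) := min_le_right _ _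
  clear_value c₃
  clear hc₃def
  clear_value B
  have hg16 : u^2 + ρ2 ≤ 16*S₁^2 := by nlinarith [hg2, hcase2, hg]
  have hb' : c₃ * (2*τ) ≤ 1 := by
    rw [← le_div_iff₀ (by positivity : (0:ℝ) < 2*τ)]; exact h3a
  have hc' : c₃ * (4*τ*B) ≤ S-S₁ := by
    rw [← le_div_iff₀ (by positivity : (0:ℝ) < 4*τ*B)]; exact h3b
  have hδt : S-S₁ < 2*(τ*t) := by
    rw [div_lt_iff₀ (by norm_num : (0:ℝ) < 2)] at hcase; linarith
  have hcB : c₃ * B ≤ t/2 := by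
    have h1 : c₃ * (4*τ*B) ≤ 2*(τ*t) := by linarith
    have h2 : (c₃*B)*(4*τ) ≤ (t/2)*(4*τ) := by nlinarith [h1]
    exact le_of_mul_le_mul_right h2 (by positivity)
  have hcτt : c₃ * (τ*t) ≤ t/2 := by
    have h1 : (c₃*(τ*t))*2 ≤ t*1 := by nlinarith [mul_le_mul_of_nonneg_right hb' ht.le]
    linarith
  have hXB : u^2 + (1 + ρ2 + p + m^2) ≤ B + τ*t := by
    rw [hBdef]; nlinarith [hg16, hm2u, hpu, hρ2]
  calc c₃ * (u^2 + (1 + ρ2 + p + m^2)) ≤ c₃ * (B + τ*t) :=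
        mul_le_mul_of_nonneg_left hXB hc₃0.le
    _ = c₃*B + c₃*(τ*t) := by ring
    _ ≤ t/2 + t/2 := by linarith
    _ ≤ A + t := by linarith

lemma key_real (τ S₁ S : ℝ) (hτ : 0 < τ) (hS₁ : 0 < S₁) (hS : S₁ < S) :
    ∃ c : ℝ, 0 < c ∧ ∀ r y1 t g A : ℝ, S ≤ r → y1^2 ≤ r^2 → 0 < t → 0 ≤ g → 0 ≤ A →
      g^2 = (y1 - τ*t)^2 + (r^2 - y1^2) → (S₁ ≤ g → (g - S₁)^2 ≤ A) → (r - τ*t ≤ g) →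
      c * ((y1 - τ*t)^2 + (1 + (r^2 - y1^2) + max y1 0 + (min y1 0)^2)) ≤ A + t := by
  have hδ : 0 < S - S₁ := by linarith
  have hS0 : 0 < S := lt_trans hS₁ hS
  refine ⟨min ((S-S₁)^2/(4*(17/4*S^2+S+1)))
      (min (min (1/5) (min (1/(2*τ)) ((S-S₁)/(6*τ))))
        (min (1/(2*τ)) ((S-S₁)/(4*τ*(56*S₁^2+3/2))))), ?_, ?_⟩
  · refine lt_min (by positivity) (lt_min (lt_min (by norm_num)
      (lt_min (by positivity) (by positivity))) (lt_min (by positivity) (by positivity)))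
  intro r y1 t g A hr hy1 ht hg hA hg2 hA2 hgr
  have hr0 : 0 < r := lt_of_lt_of_le hS0 hr
  have hy1r : y1 ≤ r := by nlinarith [sq_nonneg (y1 - r)]
  have hτt : 0 ≤ τ*t := (mul_pos hτ ht).le
  have hp0 : 0 ≤ max y1 0 := le_max_right _ _
  have hpr : max y1 0 ≤ r := max_le hy1r hr0.le
  have hpu : max y1 0 ≤ (1 + (y1-τ*t)^2)/2 + τ*t := by
    apply max_le
    · nlinarith [sq_nonneg (y1 - τ*t - 1)]
    · nlinarith [sq_nonneg (y1 - τ*t)]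
  have hm2u : (min y1 0)^2 ≤ (y1-τ*t)^2 := by
    rcases le_total y1 0 with h | h
    · rw [min_eq_left h]; nlinarith
    · rw [min_eq_right h]; simpa using sq_nonneg (y1 - τ*t)
  have hm2r : (min y1 0)^2 ≤ r^2 := by
    rcases le_total y1 0 with h | h
    · rw [min_eq_left h]; exact hy1
    · rw [min_eq_right h]; simpa using sq_nonneg r
  have hρ2 : 0 ≤ r^2 - y1^2 := by linarith
  have hX0 : 0 ≤ (y1 - τ*t)^2 + (1 + (r^2 - y1^2) + max y1 0 + (min y1 0)^2) := by positivity
  rcases le_or_gt (τ*t) ((S-S₁)/2) with hcase | hcase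
  · refine le_trans (mul_le_mul_of_nonneg_right (min_le_left _ _) hX0) ?_
    exact aux_case1 S₁ S τ t r y1 g A _ _ hS₁ hS hr hy1 hτt hcase hgr hA2 hp0 hpr hm2r ht.le hA
  · rcases le_or_gt (4*S₁) g with hcase2 | hcase2
    · refine le_trans (mul_le_mul_of_nonneg_right
        (le_trans (min_le_right _ _) (min_le_left _ _)) hX0) ?_
      exact aux_case2 S₁ S τ t _ _ g A _ _ hS₁ hS hτ ht hcase hcase2 hg2 hρ2 hA2 hpu hm2u
    · refine le_trans (mul_le_mul_of_nonneg_right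
        (le_trans (min_le_right _ _) (min_le_right _ _)) hX0) ?_
      exact aux_case3 S₁ S τ t _ _ g A _ _ hS₁ hS hτ ht hcase hcase2 hg hg2 hρ2 hA hpu hm2u

lemma norm_exp_skew (Ω : Matrix (Fin 3) (Fin 3) ℝ) (hΩ : Ωᵀ = -Ω) (t : ℝ)
    (z : EuclideanSpace ℝ (Fin 3)) :
    ‖toE3 ((exp (-(t • Ω))).mulVec z)‖ = ‖z‖ := by
  set M := exp (-(t • Ω)) with hM
  have hMt : Mᵀ * M = 1 := by
    have h1 : Mᵀ = exp (t • Ω) := by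
      rw [hM, ← Matrix.exp_transpose]
      congr 1
      rw [Matrix.transpose_neg, Matrix.transpose_smul, hΩ, smul_neg, neg_neg]
    rw [h1, ← Matrix.exp_add_of_commute (t • Ω) (-(t • Ω)) ((Commute.refl _).neg_right)]
    simp [NormedSpace.exp_zero]
  have hdot : (M.mulVec z) ⬝ᵥ (M.mulVec z) = (z : Fin 3 → ℝ) ⬝ᵥ z := by
    rw [Matrix.dotProduct_mulVec, ← Matrix.mulVec_transpose, Matrix.mulVec_mulVec, hMt,
      Matrix.one_mulVec]
  have h0 : ∀ v : Fin 3 → ℝ, ‖toE3 v‖ = Real.sqrt (v ⬝ᵥ v) := by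
    intro v
    rw [EuclideanSpace.norm_eq]
    congr 1
    simp [toE3, dotProduct, Real.norm_eq_abs, sq_abs, pow_two]
  rw [h0]
  have hz : ‖z‖ = Real.sqrt ((z : Fin 3 → ℝ) ⬝ᵥ z) := by
    rw [EuclideanSpace.norm_eq]
    congr 1
    simp [dotProduct, Real.norm_eq_abs, sq_abs, pow_two]
  rw [hz, hdot]

theorem time_integral_decay (ν τ S₁ S : ℝ) (hν : 1 < ν) (hτ : 0 < τ)
    (hS₁ : 0 < S₁) (hS : S₁ < S) (Ω : Matrix (Fin 3) (Fin 3) ℝ) (hΩ : Ωᵀ = -Ω) :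
    ∃ C : ℝ, 0 < C ∧ ∀ y z : EuclideanSpace ℝ (Fin 3), S ≤ ‖y‖ → ‖z‖ ≤ S₁ →
      (∫ t in Set.Ioi (0:ℝ),
          (‖y - (τ * t) • (EuclideanSpace.single 0 (1:ℝ))
             - toE3 ((exp (-(t • Ω))).mulVec z)‖ ^ 2 + t) ^ (-ν))
        ≤ C * (‖y‖ * sTau τ y) ^ (-ν + 1/2) := by
  obtain ⟨c, hc, hkey⟩ := key_real τ S₁ S hτ hS₁ hS
  set I : ℝ := ∫ v : ℝ, (1 + v^2) ^ (-ν) with hIdef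
  have hI0 : 0 ≤ I := by
    rw [hIdef]
    exact integral_nonneg fun v => Real.rpow_nonneg (by positivity) _
  have hS0 : 0 < S := lt_trans hS₁ hS
  refine ⟨c^(-ν) * τ⁻¹ * (I + 1) * (1+2*τ)^(ν - 1/2), by positivity, ?_⟩
  intro y z hy hz
  set r := ‖y‖ with hrdef
  set y1 := y 0 with hy1def
  have hr0 : 0 < r := lt_of_lt_of_le hS0 hy
  -- coordinate bound
  have hy1abs : |y1| ≤ r := by
    have h := abs_real_inner_le_norm y (EuclideanSpace.single 0 (1:ℝ))
    simpa [EuclideanSpace.inner_single_right] using h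
  have hy1sq : y1^2 ≤ r^2 := by
    have := sq_abs y1 ▸ pow_le_pow_left₀ (abs_nonneg y1) hy1abs 2
    simpa [sq_abs] using this
  have hy1r : y1 ≤ r := le_trans (le_abs_self y1) hy1abs
  have hy1r' : -r ≤ y1 := by
    have := neg_abs_le y1; linarith
  set E : ℝ := 1 + (r^2 - y1^2) + max y1 0 + (min y1 0)^2 with hEdef
  have hρ2 : 0 ≤ r^2 - y1^2 := by linarith
  have hE1 : 1 ≤ E := by
    rw [hEdef]
    have h1 : 0 ≤ max y1 0 := le_max_right _ _
    have h2 : 0 ≤ (min y1 0)^2 := sq_nonneg _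
    linarith
  have hE0 : 0 < E := by linarith
  -- s_tau facts
  have hs1 : 1 ≤ sTau τ y := by
    rw [sTau]
    have : 0 ≤ τ * (r - y1) := mul_nonneg hτ.le (by linarith)
    linarith
  have hrs0 : 0 < r * sTau τ y := mul_pos hr0 (by linarith)
  have hrsE : r * sTau τ y ≤ (1+2*τ) * E := by
    rw [sTau, hEdef]
    rcases le_total 0 y1 with h0 | h0
    · rw [max_eq_left h0, min_eq_right h0]
      have ha2 : (r - y1)^2 ≤ r^2 - y1^2 := by nlinarith [mul_nonneg h0 (by linarith : (0:ℝ) ≤ r - y1)]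
      have hry : r*(r-y1) ≤ r^2 - y1^2 := by nlinarith [mul_nonneg h0 (by linarith : (0:ℝ) ≤ r - y1)]
      have hrle : r ≤ y1 + (1 + (r^2-y1^2))/2 := by nlinarith [sq_nonneg (r - y1 - 1)]
      nlinarith [mul_le_mul_of_nonneg_left hry hτ.le, mul_nonneg hτ.le hρ2,
        mul_nonneg hτ.le h0]
    · rw [max_eq_right h0, min_eq_left h0]
      have h2r : r*(r - y1) ≤ 2*r^2 := by nlinarith
      have hrle : r ≤ (1 + r^2)/2 := by nlinarith [sq_nonneg (r-1)]
      nlinarith [mul_le_mul_of_nonneg_left h2r hτ.le, mul_pos hτ hr0]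
  -- the comparison function
  set G : ℝ → ℝ := fun u => (u^2 + E) ^ (-ν) with hGdef
  have hGcont : Continuous G := by
    rw [hGdef]
    exact Continuous.rpow_const (by continuity) fun u => Or.inl (by positivity)
  have hGnonneg : ∀ u, 0 ≤ G u := fun u => Real.rpow_nonneg (by positivity) _
  have hGint : Integrable G := by
    refine integrable_inv_one_add_sq.mono' hGcont.aestronglyMeasurable (ae_of_all _ fun u => ?_)
    rw [Real.norm_eq_abs, abs_of_nonneg (hGnonneg u)]
    calc G u = (u^2 + E) ^ (-ν) := rfl
      _ ≤ (1 + u^2) ^ (-ν) :=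
          Real.rpow_le_rpow_of_nonpos (by positivity) (by linarith) (by linarith)
      _ ≤ (1 + u^2) ^ (-1 : ℝ) :=
          Real.rpow_le_rpow_of_exponent_le (by nlinarith [sq_nonneg u]) (by linarith)
      _ = (1 + u^2)⁻¹ := Real.rpow_neg_one _
  have hHint : Integrable (fun t : ℝ => G (y1 - τ * t)) := by
    have h1 : Integrable (fun s : ℝ => G (y1 - s)) := hGint.comp_sub_left y1
    have h2 := h1.comp_mul_left' (ne_of_gt hτ)
    simpa using h2
  -- pointwise bound on Ioi 0
  have hpoint : ∀ t ∈ Set.Ioi (0:ℝ),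
      (‖y - (τ * t) • (EuclideanSpace.single 0 (1:ℝ))
          - toE3 ((exp (-(t • Ω))).mulVec z)‖ ^ 2 + t) ^ (-ν)
        ≤ c^(-ν) * G (y1 - τ * t) := by
    intro t ht
    rw [Set.mem_Ioi] at ht
    set w := toE3 ((exp (-(t • Ω))).mulVec z) with hwdef
    have hw : ‖w‖ ≤ S₁ := by rw [hwdef, norm_exp_skew Ω hΩ t z]; exact hz
    set g := ‖y - (τ * t) • (EuclideanSpace.single 0 (1:ℝ))‖ with hgdef
    set A := ‖y - (τ * t) • (EuclideanSpace.single 0 (1:ℝ)) - w‖ ^ 2 with hAdef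
    have hg0 : 0 ≤ g := norm_nonneg _
    have hA0 : 0 ≤ A := sq_nonneg _
    have hip : inner ℝ y (EuclideanSpace.single 0 (1:ℝ)) = y1 := by
      simp [EuclideanSpace.inner_single_right, hy1def]
    have hg2 : g^2 = (y1 - τ*t)^2 + (r^2 - y1^2) := by
      rw [hgdef, norm_sub_sq_real, real_inner_smul_right, hip, norm_smul,
        EuclideanSpace.norm_single, norm_one, mul_one, Real.norm_eq_abs,
        abs_of_nonneg (mul_nonneg hτ.le ht.le)]
      rw [← hrdef]; ring
    have hA2 : S₁ ≤ g → (g - S₁)^2 ≤ A := by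
      intro hgS
      have h1 : g - ‖w‖ ≤ ‖y - (τ * t) • (EuclideanSpace.single 0 (1:ℝ)) - w‖ :=
        norm_sub_norm_le _ _
      have h2 : g - S₁ ≤ ‖y - (τ * t) • (EuclideanSpace.single 0 (1:ℝ)) - w‖ := by linarith
      rw [hAdef]
      exact pow_le_pow_left₀ (by linarith) h2 2
    have hgr : r - τ*t ≤ g := by
      have h1 := norm_sub_norm_le y ((τ * t) • (EuclideanSpace.single 0 (1:ℝ)))
      rw [norm_smul, EuclideanSpace.norm_single, norm_one, mul_one, Real.norm_eq_abs,
        abs_of_nonneg (mul_nonneg hτ.le ht.le)] at h1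
      exact h1
    have hk := hkey r y1 t g A hy hy1sq ht hg0 hA0 hg2 hA2 hgr
    have hX0 : 0 < (y1 - τ*t)^2 + E := by nlinarith [sq_nonneg (y1 - τ*t)]
    have hden : (0:ℝ) < c * ((y1 - τ*t)^2 + E) := mul_pos hc hX0
    have hstep : (A + t) ^ (-ν) ≤ (c * ((y1 - τ*t)^2 + E)) ^ (-ν) := by
      apply Real.rpow_le_rpow_of_nonpos hden _ (by linarith)
      rw [hEdef]; exact hk
    calc (‖y - (τ * t) • (EuclideanSpace.single 0 (1:ℝ))
            - toE3 ((exp (-(t • Ω))).mulVec z)‖ ^ 2 + t) ^ (-ν)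
        = (A + t) ^ (-ν) := by rw [hAdef, hwdef]
      _ ≤ (c * ((y1 - τ*t)^2 + E)) ^ (-ν) := hstep
      _ = c^(-ν) * ((y1 - τ*t)^2 + E) ^ (-ν) := Real.mul_rpow hc.le hX0.le
      _ = c^(-ν) * G (y1 - τ*t) := by rw [hGdef]
  -- integral comparison
  have hmono : (∫ t in Set.Ioi (0:ℝ),
      (‖y - (τ * t) • (EuclideanSpace.single 0 (1:ℝ))
          - toE3 ((exp (-(t • Ω))).mulVec z)‖ ^ 2 + t) ^ (-ν))
      ≤ ∫ t in Set.Ioi (0:ℝ), c^(-ν) * G (y1 - τ * t) := by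
    apply integral_mono_of_nonneg
    · filter_upwards [ae_restrict_mem measurableSet_Ioi] with t ht
      exact Real.rpow_nonneg (add_nonneg (by positivity) (le_of_lt ht)) _
    · exact ((hHint.const_mul _).restrict)
    · filter_upwards [ae_restrict_mem measurableSet_Ioi] with t ht
      exact hpoint t ht
  have hset : (∫ t in Set.Ioi (0:ℝ), c^(-ν) * G (y1 - τ * t))
      ≤ ∫ t : ℝ, c^(-ν) * G (y1 - τ * t) := by
    apply setIntegral_le_integral (hHint.const_mul _)
    exact ae_of_all _ fun t => mul_nonneg (Real.rpow_nonneg hc.le _) (hGnonneg _)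
  -- compute the full-line integral
  have hcv1 : (∫ t : ℝ, G (y1 - τ * t)) = τ⁻¹ * ∫ u : ℝ, G u := by
    have h1 := MeasureTheory.Measure.integral_comp_mul_left (fun s => G (y1 - s)) τ
    simp only [smul_eq_mul] at h1
    rw [show (fun t : ℝ => G (y1 - τ * t)) = fun x : ℝ => (fun s => G (y1 - s)) (τ * x) from rfl,
      h1, abs_of_pos (inv_pos.mpr hτ), integral_sub_left_eq_self]
  have hcv2 : (∫ u : ℝ, G u) = Real.sqrt E * (E^(-ν) * I) := by
    have h3 := MeasureTheory.Measure.integral_comp_mul_left G (Real.sqrt E)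
    have hsE : 0 < Real.sqrt E := Real.sqrt_pos.mpr hE0
    have h4 : ∀ v : ℝ, G (Real.sqrt E * v) = E^(-ν) * (1 + v^2)^(-ν) := by
      intro v
      rw [hGdef]
      dsimp only
      rw [mul_pow, Real.sq_sqrt hE0.le,
        show E * v^2 + E = E * (1 + v^2) by ring, Real.mul_rpow hE0.le (by positivity)]
    simp only [h4, smul_eq_mul] at h3
    rw [integral_const_mul _ _, ← hIdef] at h3
    rw [abs_of_pos (inv_pos.mpr hsE)] at h3
    have h5 := congrArg (fun x => Real.sqrt E * x) h3
    rw [show Real.sqrt E * ((Real.sqrt E)⁻¹ * ∫ u : ℝ, G u) = ∫ u : ℝ, G u by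
      field_simp] at h5
    rw [← h5]
  -- power computation
  have hEpow : Real.sqrt E * E^(-ν) = E^(-ν + 1/2) := by
    rw [Real.sqrt_eq_rpow _, ← Real.rpow_add hE0]
    congr 1; ring
  have hfinal : E^(-ν + 1/2) ≤ (1+2*τ)^(ν - 1/2) * (r * sTau τ y)^(-ν + 1/2) := by
    have h1 : r * sTau τ y / (1+2*τ) ≤ E := by
      rw [div_le_iff₀ (by positivity)]
      calc r * sTau τ y ≤ (1+2*τ) * E := hrsE
        _ = E * (1+2*τ) := by ring
    have h2 : (0:ℝ) < r * sTau τ y / (1+2*τ) := by positivity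
    have h3 : E^(-ν+1/2) ≤ (r * sTau τ y / (1+2*τ))^(-ν+1/2) :=
      Real.rpow_le_rpow_of_nonpos h2 h1 (by linarith)
    calc E^(-ν+1/2) ≤ (r * sTau τ y / (1+2*τ))^(-ν+1/2) := h3
      _ = (r * sTau τ y)^(-ν+1/2) / (1+2*τ)^(-ν+1/2) :=
          Real.div_rpow hrs0.le (by positivity) _
      _ = (1+2*τ)^(ν-1/2) * (r * sTau τ y)^(-ν+1/2) := by
          rw [div_eq_mul_inv, ← Real.rpow_neg (by positivity : (0:ℝ) ≤ 1+2*τ)]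
          rw [show -(-ν+1/2) = ν - 1/2 by ring]; ring
  -- put it together
  have hchain : (∫ t : ℝ, c^(-ν) * G (y1 - τ * t))
      = c^(-ν) * τ⁻¹ * (E^(-ν+1/2) * I) := by
    rw [integral_const_mul _ _, hcv1, hcv2, ← hEpow]; ring
  have hIbound : c^(-ν) * τ⁻¹ * (E^(-ν+1/2) * I)
      ≤ c^(-ν) * τ⁻¹ * (I + 1) * ((1+2*τ)^(ν-1/2) * (r * sTau τ y)^(-ν+1/2)) := by
    have ha : (0:ℝ) ≤ c^(-ν) * τ⁻¹ := by positivity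
    have hEp : (0:ℝ) ≤ E^(-ν+1/2) := Real.rpow_nonneg hE0.le _
    have hb1 : E^(-ν+1/2) * I ≤ E^(-ν+1/2) * (I+1) :=
      mul_le_mul_of_nonneg_left (by linarith) hEp
    have hb2 : E^(-ν+1/2) * (I+1) ≤ ((1+2*τ)^(ν-1/2) * (r * sTau τ y)^(-ν+1/2)) * (I+1) :=
      mul_le_mul_of_nonneg_right hfinal (by linarith)
    calc c^(-ν) * τ⁻¹ * (E^(-ν+1/2) * I)
        ≤ c^(-ν) * τ⁻¹ * (((1+2*τ)^(ν-1/2) * (r * sTau τ y)^(-ν+1/2)) * (I+1)) :=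
          mul_le_mul_of_nonneg_left (by linarith) ha
      _ = c^(-ν) * τ⁻¹ * (I + 1) * ((1+2*τ)^(ν-1/2) * (r * sTau τ y)^(-ν+1/2)) := by ring
  calc (∫ t in Set.Ioi (0:ℝ),
      (‖y - (τ * t) • (EuclideanSpace.single 0 (1:ℝ))
          - toE3 ((exp (-(t • Ω))).mulVec z)‖ ^ 2 + t) ^ (-ν))
      ≤ ∫ t in Set.Ioi (0:ℝ), c^(-ν) * G (y1 - τ * t) := hmono
    _ ≤ ∫ t : ℝ, c^(-ν) * G (y1 - τ * t) := hset
    _ = c^(-ν) * τ⁻¹ * (E^(-ν+1/2) * I) := hchain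
    _ ≤ c^(-ν) * τ⁻¹ * (I + 1) * ((1+2*τ)^(ν-1/2) * (r * sTau τ y)^(-ν+1/2)) := hIbound
    _ = c^(-ν) * τ⁻¹ * (I + 1) * (1+2*τ)^(ν-1/2) * (r * sTau τ y)^(-ν+1/2) := by ring
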